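/- Let c be a real number with 0 < |c| < √2. Then the scalar momentum of the soliton, P(Q_c) := (1/2)·∫_ℝ η_c(x)·v_c(x) dx, equals arctan(c/√(2−c²)) + c·√(2−c²)/2 − sign(c)·π/2, where sign(c) = 1 if c > 0 and sign(c) = −1 if c < 0. -/

import Mathlib

open MeasureTheory Filter Topology

/-- Explicit value of the momentum of the soliton `Q_c`:
`P(Q_c) = arctan(c/√(2-c²)) + c √(2-c²)/2 - sign(c) π/2`. -/
theorem momentum_of_soliton (c : ℝ) (hc0 : c ≠ 0) (hc : |c| < Real.sqrt 2)
    (η v : ℝ → ℝ)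
    (hη : ∀ x : ℝ, η x =
      (2 - c ^ 2) / (2 * (Real.cosh (Real.sqrt (2 - c ^ 2) * x / 2)) ^ 2))
    (hv : ∀ x : ℝ, v x = -c * η x / (2 * (1 - η x))) :
    (1 / 2) * (∫ x : ℝ, η x * v x) =
      Real.arctan (c / Real.sqrt (2 - c ^ 2)) + c * Real.sqrt (2 - c ^ 2) / 2
        - (if 0 < c then (1 : ℝ) else -1) * Real.pi / 2 := by
  have h2 : c ^ 2 < 2 := by
    have h := mul_self_lt_mul_self (abs_nonneg c) hc
    rw [Real.mul_self_sqrt (by norm_num), abs_mul_abs_self] at h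
    nlinarith
  have hc2 : 0 < c ^ 2 := by positivity
  set K := Real.sqrt (2 - c ^ 2) with hKdef
  have hK : 0 < K := Real.sqrt_pos.mpr (by linarith)
  have hK2 : K ^ 2 = 2 - c ^ 2 := Real.sq_sqrt (by linarith)
  -- pointwise formula
  have key : ∀ x : ℝ, η x * v x =
      -(c * K ^ 4) /
        (4 * Real.cosh (K * x / 2) ^ 2 * (c ^ 2 + 2 * Real.sinh (K * x / 2) ^ 2)) := by
    intro x
    have hch : (0 : ℝ) < Real.cosh (K * x / 2) := Real.cosh_pos _
    have hpy := Real.cosh_sq_sub_sinh_sq (K * x / 2)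
    have h1 : 1 - η x =
        (c ^ 2 + 2 * Real.sinh (K * x / 2) ^ 2) / (2 * Real.cosh (K * x / 2) ^ 2) := by
      rw [hη x]
      field_simp
      linear_combination 2 * hpy
    have hK4 : K ^ 4 = (2 - c ^ 2) ^ 2 := by rw [← hK2]; ring
    rw [hv x, h1, hη x, hK4]
    have hd : (0 : ℝ) < c ^ 2 + 2 * Real.sinh (K * x / 2) ^ 2 := by positivity
    field_simp
    ring
  -- the antiderivative
  set F : ℝ → ℝ := fun x =>
    c * K / 2 * (Real.sinh (K * x / 2) / Real.cosh (K * x / 2)) -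
      Real.arctan (K * (Real.sinh (K * x / 2) / Real.cosh (K * x / 2)) / c) with hFdef
  have hF : ∀ x : ℝ, HasDerivAt F (η x * v x) x := by
    intro x
    have hch : (0 : ℝ) < Real.cosh (K * x / 2) := Real.cosh_pos _
    have hpy := Real.cosh_sq_sub_sinh_sq (K * x / 2)
    have hid : HasDerivAt (fun y : ℝ => K * y / 2) (K / 2) x := by
      simpa using ((hasDerivAt_id x).const_mul K).div_const 2
    have hs : HasDerivAt (fun y : ℝ => Real.sinh (K * y / 2))
        (Real.cosh (K * x / 2) * (K / 2)) x := (Real.hasDerivAt_sinh _).comp x hid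
    have hco : HasDerivAt (fun y : ℝ => Real.cosh (K * y / 2))
        (Real.sinh (K * x / 2) * (K / 2)) x := (Real.hasDerivAt_cosh _).comp x hid
    have hT : HasDerivAt (fun y : ℝ => Real.sinh (K * y / 2) / Real.cosh (K * y / 2))
        ((Real.cosh (K * x / 2) * (K / 2) * Real.cosh (K * x / 2) -
          Real.sinh (K * x / 2) * (Real.sinh (K * x / 2) * (K / 2))) /
            Real.cosh (K * x / 2) ^ 2) x := hs.div hco hch.ne'
    have hInner : HasDerivAt
        (fun y : ℝ => K * (Real.sinh (K * y / 2) / Real.cosh (K * y / 2)) / c)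
        (K * ((Real.cosh (K * x / 2) * (K / 2) * Real.cosh (K * x / 2) -
          Real.sinh (K * x / 2) * (Real.sinh (K * x / 2) * (K / 2))) /
            Real.cosh (K * x / 2) ^ 2) / c) x := (hT.const_mul K).div_const c
    have hAt := (Real.hasDerivAt_arctan
        (K * (Real.sinh (K * x / 2) / Real.cosh (K * x / 2)) / c)).comp x hInner
    have hsum := (hT.const_mul (c * K / 2)).sub hAt
    refine HasDerivAt.congr_deriv hsum ?_
    symm
    rw [key x]
    have hd : (0 : ℝ) < c ^ 2 + 2 * Real.sinh (K * x / 2) ^ 2 := by positivity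
    have harg : 1 + (K * (Real.sinh (K * x / 2) / Real.cosh (K * x / 2)) / c) ^ 2 ≠ 0 := by
      positivity
    set ch := Real.cosh (K * x / 2) with hch_def
    set s := Real.sinh (K * x / 2) with hs_def
    have hnum : ch * (K / 2) * ch - s * (s * (K / 2)) = K / 2 := by
      linear_combination (K / 2) * hpy
    rw [hnum]
    have hden2 : c ^ 2 * ch ^ 2 + K ^ 2 * s ^ 2 = c ^ 2 + 2 * s ^ 2 := by
      linear_combination c ^ 2 * hpy + s ^ 2 * hK2
    have hne3 : c ^ 2 * ch ^ 2 + K ^ 2 * s ^ 2 ≠ 0 := by rw [hden2]; exact hd.ne'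
    have hstep : c * K / 2 * (K / 2 / ch ^ 2) - 1 / (1 + (K * (s / ch) / c) ^ 2) *
        (K * (K / 2 / ch ^ 2) / c) =
        c * K ^ 2 / (4 * ch ^ 2) - c * K ^ 2 / (2 * (c ^ 2 * ch ^ 2 + K ^ 2 * s ^ 2)) := by
      field_simp
      ring
    rw [hstep, hden2, div_sub_div _ _ (by positivity) (by positivity),
      div_eq_div_iff (by positivity) (by positivity)]
    linear_combination (-2 * (4 * ch ^ 2 * (c ^ 2 + 2 * s ^ 2)) * c * K ^ 2) * hK2 +
      (4 * (4 * ch ^ 2 * (c ^ 2 + 2 * s ^ 2)) * c * K ^ 2) * hpy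
  -- integrability
  have hmeas : AEStronglyMeasurable (fun x => η x * v x) volume := by
    have : (fun x => η x * v x) = deriv F := funext fun x => ((hF x).deriv).symm
    rw [this]
    exact (measurable_deriv F).aestronglyMeasurable
  have hIoi : IntegrableOn (fun x : ℝ => Real.exp (-(K * |x|))) (Set.Ioi 0) := by
    refine (exp_neg_integrableOn_Ioi 0 hK).congr_fun (fun x hx => ?_) measurableSet_Ioi
    rw [abs_of_pos hx]
    ring_nf
  have hIic : IntegrableOn (fun x : ℝ => Real.exp (-(K * |x|))) (Set.Iic 0) := by
    rw [← Measure.map_neg_eq_self (volume : Measure ℝ)]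
    have m : MeasurableEmbedding fun x : ℝ => -x :=
      (Homeomorph.neg ℝ).measurableEmbedding
    rw [m.integrableOn_map_iff]
    simp_rw [Function.comp_def, abs_neg, Set.neg_preimage, Set.neg_Iic, neg_zero]
    exact Iff.mpr integrableOn_Ici_iff_integrableOn_Ioi hIoi
  have hbase : Integrable (fun x : ℝ => Real.exp (-(K * |x|))) := by
    rw [← integrableOn_univ, ← Set.Iic_union_Ioi (a := (0 : ℝ))]
    exact hIic.union hIoi
  have hint : Integrable (fun x => η x * v x) := by
    refine Integrable.mono' (hbase.const_mul (K ^ 4 / |c|)) hmeas ?_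
    filter_upwards with x
    have hch : (0 : ℝ) < Real.cosh (K * x / 2) := Real.cosh_pos _
    have hd : (0 : ℝ) < c ^ 2 + 2 * Real.sinh (K * x / 2) ^ 2 := by positivity
    have hcosh_ge : Real.exp (K * |x|) / 4 ≤ Real.cosh (K * x / 2) ^ 2 := by
      have h1 : Real.exp (K * |x| / 2) / 2 ≤ Real.cosh (K * x / 2) := by
        rw [Real.cosh_eq]
        rcases abs_cases x with ⟨h, _⟩ | ⟨h, _⟩
        · rw [h]
          have := Real.exp_pos (-(K * x / 2))
          nlinarith [Real.exp_pos (K * x / 2)]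
        · rw [h]
          have h3 : K * -x / 2 = -(K * x / 2) := by ring
          rw [h3]
          nlinarith [Real.exp_pos (K * x / 2), Real.exp_pos (-(K * x / 2))]
      have h2 : Real.exp (K * |x| / 2) ^ 2 = Real.exp (K * |x|) := by
        rw [sq, ← Real.exp_add]
        congr 1
        ring
      nlinarith [Real.exp_pos (K * |x| / 2)]
    rw [key x]
    have hden : c ^ 2 * Real.exp (K * |x|) ≤
        4 * Real.cosh (K * x / 2) ^ 2 * (c ^ 2 + 2 * Real.sinh (K * x / 2) ^ 2) := by
      nlinarith [sq_nonneg (Real.sinh (K * x / 2)), Real.exp_pos (K * |x|)]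
    have habs : ‖-(c * K ^ 4) /
        (4 * Real.cosh (K * x / 2) ^ 2 * (c ^ 2 + 2 * Real.sinh (K * x / 2) ^ 2))‖ =
        |c| * K ^ 4 / (4 * Real.cosh (K * x / 2) ^ 2 *
          (c ^ 2 + 2 * Real.sinh (K * x / 2) ^ 2)) := by
      have hDpos : (0:ℝ) < 4 * Real.cosh (K * x / 2) ^ 2 *
          (c ^ 2 + 2 * Real.sinh (K * x / 2) ^ 2) := mul_pos (by positivity) hd
      rw [Real.norm_eq_abs, abs_div, abs_of_pos hDpos, abs_neg, abs_mul,
        abs_of_pos (pow_pos hK 4)]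
    rw [habs]
    have hstep : |c| * K ^ 4 / (4 * Real.cosh (K * x / 2) ^ 2 *
        (c ^ 2 + 2 * Real.sinh (K * x / 2) ^ 2)) ≤
        |c| * K ^ 4 / (c ^ 2 * Real.exp (K * |x|)) :=
      div_le_div_of_nonneg_left (by positivity) (by positivity) hden
    refine hstep.trans (le_of_eq ?_)
    have hcabs : |c| ≠ 0 := abs_ne_zero.mpr hc0
    rw [Real.exp_neg]
    field_simp
    linear_combination sq_abs c
  -- limits of tanh
  have hTof : ∀ x : ℝ, Real.sinh (K * x / 2) / Real.cosh (K * x / 2) =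
      1 - 2 / (Real.exp (K * x) + 1) := by
    intro x
    rw [Real.sinh_eq, Real.cosh_eq]
    have he : (0 : ℝ) < Real.exp (K * x / 2) := Real.exp_pos _
    have hsq : Real.exp (K * x) = Real.exp (K * x / 2) * Real.exp (K * x / 2) := by
      rw [← Real.exp_add]; ring_nf
    rw [hsq, Real.exp_neg]
    have h1 : (0:ℝ) < Real.exp (K * x / 2) * Real.exp (K * x / 2) + 1 := by positivity
    field_simp
    ring
  have hexp_top : Filter.Tendsto (fun x : ℝ => Real.exp (K * x)) Filter.atTop Filter.atTop :=
    Real.tendsto_exp_atTop.comp (Filter.Tendsto.const_mul_atTop hK Filter.tendsto_id)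
  have hexp_bot : Filter.Tendsto (fun x : ℝ => Real.exp (K * x)) Filter.atBot (𝓝 0) :=
    Real.tendsto_exp_atBot.comp (Filter.Tendsto.const_mul_atBot hK Filter.tendsto_id)
  have hTtop : Filter.Tendsto (fun x : ℝ => Real.sinh (K * x / 2) / Real.cosh (K * x / 2))
      Filter.atTop (𝓝 1) := by
    simp_rw [hTof]
    have h0 : Filter.Tendsto (fun x : ℝ => 2 / (Real.exp (K * x) + 1)) Filter.atTop (𝓝 0) :=
      Filter.Tendsto.div_atTop tendsto_const_nhds
        (Filter.tendsto_atTop_add_const_right _ 1 hexp_top)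
    simpa using tendsto_const_nhds.sub h0
  have hTbot : Filter.Tendsto (fun x : ℝ => Real.sinh (K * x / 2) / Real.cosh (K * x / 2))
      Filter.atBot (𝓝 (-1)) := by
    simp_rw [hTof]
    have h0 : Filter.Tendsto (fun x : ℝ => 2 / (Real.exp (K * x) + 1)) Filter.atBot (𝓝 2) := by
      have := tendsto_const_nhds (α := ℝ) (x := (2:ℝ)) (f := Filter.atBot (α := ℝ))
      have hden := hexp_bot.add (tendsto_const_nhds (x := (1:ℝ)))
      rw [zero_add] at hden
      have h := this.div hden one_ne_zero
      rw [div_one] at h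
      exact h
    have := tendsto_const_nhds (α := ℝ) (x := (1:ℝ)) (f := Filter.atBot (α := ℝ))
    have h3 := this.sub h0
    norm_num at h3
    exact h3
  have hGcont : Continuous (fun u : ℝ => c * K / 2 * u - Real.arctan (K * u / c)) :=
    (continuous_const.mul continuous_id).sub
      (Real.continuous_arctan.comp ((continuous_const.mul continuous_id).div_const c))
  have hFtop : Filter.Tendsto F Filter.atTop
      (𝓝 (c * K / 2 * 1 - Real.arctan (K * 1 / c))) :=
    ((hGcont.tendsto 1).comp hTtop : _)
  have hFbot : Filter.Tendsto F Filter.atBot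
      (𝓝 (c * K / 2 * (-1) - Real.arctan (K * (-1) / c))) :=
    ((hGcont.tendsto (-1)).comp hTbot : _)
  have hInt := integral_of_hasDerivAt_of_tendsto hF hint hFbot hFtop
  rw [hInt]
  have harctan_neg : Real.arctan (K * (-1) / c) = - Real.arctan (K / c) := by
    rw [show K * (-1) / c = -(K / c) by ring, Real.arctan_neg]
  rw [harctan_neg, mul_one]
  have hinv : (K / c)⁻¹ = c / K := by rw [inv_div]
  rcases lt_or_gt_of_ne hc0 with hneg | hpos
  · have hKC : K / c < 0 := div_neg_of_pos_of_neg hK hneg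
    have h := Real.arctan_inv_of_neg hKC
    rw [hinv] at h
    rw [if_neg (not_lt.mpr hneg.le), h]
    ring
  · have hKC : 0 < K / c := div_pos hK hpos
    have h := Real.arctan_inv_of_pos hKC
    rw [hinv] at h
    rw [if_pos hpos, h]
    ring
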